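/- If, for each i = 1,…,m, the matrix-valued map x ↦ B_i(x) is continuous on ℝ^n with symmetric positive definite values, then the optimal value function β_ω : ℝ^n → ℝ is continuous. -/

import Mathlib

open Filter Topology
open scoped RealInnerProductSpace

noncomputable section

/-- `Euc n` is Euclidean `n`-space `ℝ^n`. -/
abbrev Euc (n : ℕ) := EuclideanSpace ℝ (Fin n)

/-- `HasDirDeriv f x d D` : the one-sided directional derivative of `f` at `x`
in direction `d` exists and equals `D`, i.e. `(f (x + α • d) - f x)/α → D` as `α → 0⁺`. -/
def HasDirDeriv {n : ℕ} (f : Euc n → ℝ) (x d : Euc n) (D : ℝ) : Prop :=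
  Filter.Tendsto (fun α : ℝ => (f (x + α • d) - f x) / α)
    (nhdsWithin 0 (Set.Ioi 0)) (nhds D)

/-- `x` is Pareto stationary for the objectives `F i`:
for every direction `d`, `max_i F_i'(x; d) ≥ 0`, i.e. some objective has
nonnegative directional derivative in direction `d`. -/
def ParetoStationary {n m : ℕ} (F : Fin m → Euc n → ℝ) (x : Euc n) : Prop :=
  ∀ d : Euc n, ∃ i : Fin m, ∃ D : ℝ, HasDirDeriv (F i) x d D ∧ 0 ≤ D

/-- `θ_x(d) = max_i { ⟪∇g_i(x), d⟫ + ½⟪d, B_i(x) d⟫ + h_i(x+d) - h_i(x) }`. -/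
def theta {n m : ℕ} (g h : Fin m → Euc n → ℝ)
    (B : Fin m → Euc n → (Euc n →L[ℝ] Euc n)) (x d : Euc n) : ℝ :=
  ⨆ i : Fin m, (⟪gradient (g i) x, d⟫ + (1 / 2) * ⟪d, B i x d⟫ + h i (x + d) - h i x)

/-- `φ_{ω,x}(d) = θ_x(d) + (ω/2)‖d‖²`. -/
def phi {n m : ℕ} (g h : Fin m → Euc n → ℝ)
    (B : Fin m → Euc n → (Euc n →L[ℝ] Euc n)) (ω : ℝ) (x d : Euc n) : ℝ :=
  theta g h B x d + (ω / 2) * ‖d‖ ^ 2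

/-- Auxiliary: a single component is bounded above by `theta`. -/
lemma component_le_theta {n m : ℕ} (g h : Fin m → Euc n → ℝ)
    (B : Fin m → Euc n → (Euc n →L[ℝ] Euc n)) (x d : Euc n) (i : Fin m) :
    (⟪gradient (g i) x, d⟫ + (1 / 2) * ⟪d, B i x d⟫ + h i (x + d) - h i x)
      ≤ theta g h B x d := by
  unfold theta
  exact le_ciSup
    (f := fun j => (⟪gradient (g j) x, d⟫ + (1 / 2) * ⟪d, B j x d⟫ + h j (x + d) - h j x))
    (Set.Finite.bddAbove (Set.finite_range _)) i

/-- Auxiliary: linear-growth lower bound for a convex function. -/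
lemma convex_lower_bound {n : ℕ} (h : Euc n → ℝ) (hh : ConvexOn ℝ Set.univ h) (x d : Euc n)
    (ht : 1 < ‖d‖) (M : ℝ) (hM1 : |h (x + ‖d‖⁻¹ • d)| ≤ M) (hM2 : |h x| ≤ M) :
    -(2 * M * (‖d‖ + 1)) ≤ h (x + d) - h x := by
  set t : ℝ := ‖d‖ with htdef
  have ht0 : (0:ℝ) < t := by linarith
  have key : h ((1 - t⁻¹) • x + t⁻¹ • (x + d)) ≤ (1 - t⁻¹) * h x + t⁻¹ * h (x + d) :=
    hh.2 (Set.mem_univ x) (Set.mem_univ (x + d)) (by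
      have : t⁻¹ ≤ 1 := by
        rw [inv_le_one_iff₀]; right; linarith
      linarith) (by positivity) (by ring)
  have hpt : (1 - t⁻¹) • x + t⁻¹ • (x + d) = x + t⁻¹ • d := by
    module
  rw [hpt] at key
  have ht1 : 1 ≤ t := ht.le
  have hMpos : 0 ≤ M := (abs_nonneg _).trans hM2
  have hco : 0 ≤ 1 - t⁻¹ := by
    have : t⁻¹ ≤ 1 := by rw [inv_le_one_iff₀]; right; linarith
    linarith
  have s0 : (1 - t⁻¹) * h x ≤ (1 - t⁻¹) * M := mul_le_mul_of_nonneg_left (abs_le.mp hM2).2 hco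
  have s1 : -M - (1 - t⁻¹) * M ≤ t⁻¹ * h (x + d) := by
    have := (abs_le.mp hM1).1
    linarith
  have s2 : t * (-M - (1 - t⁻¹) * M) ≤ t * (t⁻¹ * h (x + d)) :=
    mul_le_mul_of_nonneg_left s1 ht0.le
  have s3 : t * (t⁻¹ * h (x + d)) = h (x + d) := by
    field_simp
  have s4 : t * (-M - (1 - t⁻¹) * M) = -(2*M*t) + M := by
    field_simp; ring
  rw [s3, s4] at s2
  have := (abs_le.mp hM2).2
  nlinarith [mul_nonneg hMpos ht0.le]

/-- continuity of the optimal value function β_ω. -/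
theorem beta_continuous
    {n m : ℕ} (g h : Fin m → Euc n → ℝ)
    (B : Fin m → Euc n → (Euc n →L[ℝ] Euc n))
    (hm : 0 < m)
    (hg : ∀ i, ContDiff ℝ 2 (g i))
    (hsc : ∀ i, ∃ a : ℝ, 0 < a ∧ ∀ x y : Euc n,
      a * ‖x - y‖ ^ 2 ≤ ⟪gradient (g i) x - gradient (g i) y, x - y⟫)
    (hh : ∀ i, ConvexOn ℝ Set.univ (h i))
    (hBsymm : ∀ i x (u v : Euc n), ⟪B i x u, v⟫ = ⟪u, B i x v⟫)
    (hBpos : ∀ i x (d : Euc n), d ≠ 0 → 0 < ⟪d, B i x d⟫)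
    (hBcont : ∀ i, Continuous (fun x => B i x))
    (ω : ℝ) (hω : 0 < ω)
    (dω : Euc n → Euc n)
    (hmin : ∀ y d, phi g h B ω y (dω y) ≤ phi g h B ω y d)
    (huniq : ∀ y d, (∀ d', phi g h B ω y d ≤ phi g h B ω y d') → d = dω y) :
    Continuous (fun x => phi g h B ω x (dω x)) := by
  haveI : Nonempty (Fin m) := ⟨⟨0, hm⟩⟩
  set i0 : Fin m := ⟨0, hm⟩
  -- continuity ingredients
  have hgrad : ∀ i, Continuous (gradient (g i)) := fun i =>
    (InnerProductSpace.toDual ℝ (Euc n)).symm.continuous.comp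
      ((hg i).continuous_fderiv two_ne_zero)
  have hhc : ∀ i, Continuous (h i) := fun i => by
    rw [← continuousOn_univ]; exact (hh i).continuousOn isOpen_univ
  have hBap : ∀ i, Continuous (fun p : Euc n × Euc n => B i p.1 p.2) := fun i =>
    isBoundedBilinearMap_apply.continuous.comp
      (((hBcont i).comp continuous_fst).prodMk continuous_snd)
  -- joint continuity of phi
  have hphi : Continuous (fun p : Euc n × Euc n => phi g h B ω p.1 p.2) := by
    have htheta : Continuous (fun p : Euc n × Euc n => theta g h B p.1 p.2) := by
      have heq : (fun p : Euc n × Euc n => theta g h B p.1 p.2) =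
          fun p => Finset.univ.sup' Finset.univ_nonempty
            (fun i => (⟪gradient (g i) p.1, p.2⟫ + (1 / 2) * ⟪p.2, B i p.1 p.2⟫
              + h i (p.1 + p.2) - h i p.1)) := by
        funext p
        rw [theta, ← Finset.sup'_univ_eq_ciSup]
      rw [heq]
      apply Continuous.finset_sup'_apply
      intro i _
      apply Continuous.sub
      · apply Continuous.add
        · apply Continuous.add
          · exact ((hgrad i).comp continuous_fst).inner continuous_snd
          · exact continuous_const.mul (continuous_snd.inner (hBap i))
        · exact (hhc i).comp (continuous_fst.add continuous_snd)
      · exact (hhc i).comp continuous_fst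
    exact htheta.add (continuous_const.mul ((continuous_snd.norm).pow 2))
  -- the optimal value is nonpositive
  have hbeta_le : ∀ x, phi g h B ω x (dω x) ≤ 0 := by
    intro x
    have ht0 : theta g h B x 0 = 0 := by simp [theta, ciSup_const]
    have h0 : phi g h B ω x 0 = 0 := by simp [phi, ht0]
    calc phi g h B ω x (dω x) ≤ phi g h B ω x 0 := hmin x 0
      _ = 0 := h0
  rw [continuous_iff_continuousAt]
  intro x₀
  -- bounds on compact neighborhoods
  obtain ⟨G, hG⟩ := (isCompact_closedBall x₀ 1).exists_bound_of_continuousOn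
    ((hgrad i0).continuousOn)
  obtain ⟨M, hM'⟩ := (isCompact_closedBall x₀ 2).exists_bound_of_continuousOn
    ((hhc i0).continuousOn)
  have hM : ∀ y ∈ Metric.closedBall x₀ 2, |h i0 y| ≤ M := by
    intro y hy
    have := hM' y hy
    rwa [Real.norm_eq_abs] at this
  have hG0 : 0 ≤ G := le_trans (norm_nonneg _) (hG x₀ (Metric.mem_closedBall_self zero_le_one))
  have hM0 : 0 ≤ M := le_trans (abs_nonneg _) (hM x₀ (Metric.mem_closedBall_self zero_le_two))
  -- lower bound on theta locally uniformly in x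
  have hθlow : ∀ x ∈ Metric.closedBall x₀ 1, ∀ d : Euc n,
      -((G + 2*M + 1) * (‖d‖ + 1)) ≤ theta g h B x d := by
    intro x hx d
    have hcomp := component_le_theta g h B x d i0
    have hip : -(G * ‖d‖) ≤ ⟪gradient (g i0) x, d⟫ := by
      have h1 : |⟪gradient (g i0) x, d⟫| ≤ ‖gradient (g i0) x‖ * ‖d‖ :=
        abs_real_inner_le_norm _ _
      have h2 : ‖gradient (g i0) x‖ * ‖d‖ ≤ G * ‖d‖ :=
        mul_le_mul_of_nonneg_right (hG x hx) (norm_nonneg d)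
      exact (abs_le.mp (h1.trans h2)).1
    have hBnn : 0 ≤ ⟪d, B i0 x d⟫ := by
      rcases eq_or_ne d 0 with rfl | hd
      · simp
      · exact (hBpos i0 x d hd).le
    have hx2 : x ∈ Metric.closedBall x₀ 2 :=
      Metric.closedBall_subset_closedBall one_le_two hx
    have hhdiff : -(2 * M * (‖d‖ + 1)) ≤ h i0 (x + d) - h i0 x := by
      rcases le_or_gt ‖d‖ 1 with hd | hd
      · have hxd : x + d ∈ Metric.closedBall x₀ 2 := by
          rw [Metric.mem_closedBall] at hx ⊢
          have hdx : dist (x + d) x = ‖d‖ := by rw [dist_eq_norm]; simp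
          calc dist (x + d) x₀ ≤ dist (x + d) x + dist x x₀ := dist_triangle _ _ _
            _ ≤ 1 + 1 := by rw [hdx]; linarith
            _ = 2 := by norm_num
        have a1 := (abs_le.mp (hM _ hxd)).1
        have a2 := (abs_le.mp (hM _ hx2)).2
        nlinarith [mul_nonneg hM0 (norm_nonneg d)]
      · have hu : x + ‖d‖⁻¹ • d ∈ Metric.closedBall x₀ 2 := by
          rw [Metric.mem_closedBall] at hx ⊢
          have hdx : dist (x + ‖d‖⁻¹ • d) x = 1 := by
            rw [dist_eq_norm]
            have : x + ‖d‖⁻¹ • d - x = ‖d‖⁻¹ • d := by abel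
            rw [this, norm_smul, norm_inv, norm_norm]
            field_simp
          calc dist (x + ‖d‖⁻¹ • d) x₀ ≤ dist (x + ‖d‖⁻¹ • d) x + dist x x₀ :=
              dist_triangle _ _ _
            _ ≤ 1 + 1 := by rw [hdx]; linarith
            _ = 2 := by norm_num
        exact convex_lower_bound (h i0) (hh i0) x d hd M (hM _ hu) (hM _ hx2)
    have hcmb : -((G + 2*M + 1) * (‖d‖ + 1)) ≤
        ⟪gradient (g i0) x, d⟫ + (1 / 2) * ⟪d, B i0 x d⟫ + h i0 (x + d) - h i0 x := by
      nlinarith [norm_nonneg d]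
    exact hcmb.trans hcomp
  -- bound on the minimizers
  set R : ℝ := max 1 (4 * (G + 2*M + 1) / ω) with hRdef
  have hRb : ∀ x ∈ Metric.closedBall x₀ 1, ‖dω x‖ ≤ R := by
    intro x hx
    have hb := hbeta_le x
    have hl := hθlow x hx (dω x)
    have h1 : ω / 2 * ‖dω x‖ ^ 2 ≤ (G + 2*M + 1) * (‖dω x‖ + 1) := by
      rw [phi] at hb
      linarith
    rcases le_or_gt ‖dω x‖ 1 with hle | hgt
    · exact hle.trans (le_max_left _ _)
    · refine le_trans ?_ (le_max_right _ _)
      rw [le_div_iff₀ hω]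
      nlinarith [h1, hgt, hω, hG0, hM0]
  -- uniform continuity on a compact product neighborhood
  have hK : IsCompact (Metric.closedBall x₀ 1 ×ˢ Metric.closedBall (0:Euc n) R) :=
    (isCompact_closedBall _ _).prod (isCompact_closedBall _ _)
  have hUC : UniformContinuousOn (fun p : Euc n × Euc n => phi g h B ω p.1 p.2)
      (Metric.closedBall x₀ 1 ×ˢ Metric.closedBall (0:Euc n) R) :=
    hK.uniformContinuousOn_of_continuous hphi.continuousOn
  have hTU : TendstoUniformlyOn (fun x d => phi g h B ω x d) (phi g h B ω x₀)
      (𝓝[Metric.closedBall x₀ 1] x₀) (Metric.closedBall (0:Euc n) R) :=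
    hUC.tendstoUniformlyOn (Metric.mem_closedBall_self zero_le_one)
  rw [nhdsWithin_eq_nhds.mpr (Metric.closedBall_mem_nhds x₀ one_pos)] at hTU
  have hTU' := Metric.tendstoUniformlyOn_iff.mp hTU
  unfold ContinuousAt
  rw [Metric.tendsto_nhds]
  intro ε hε
  filter_upwards [hTU' ε hε, Metric.closedBall_mem_nhds x₀ one_pos] with x hx1 hx2
  have hd0 : dω x₀ ∈ Metric.closedBall (0:Euc n) R :=
    mem_closedBall_zero_iff.mpr (hRb x₀ (Metric.mem_closedBall_self zero_le_one))
  have hdx : dω x ∈ Metric.closedBall (0:Euc n) R :=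
    mem_closedBall_zero_iff.mpr (hRb x hx2)
  have e1 := hx1 (dω x₀) hd0
  have e2 := hx1 (dω x) hdx
  rw [Real.dist_eq, abs_sub_lt_iff] at e1 e2
  rw [Real.dist_eq, abs_sub_lt_iff]
  constructor
  · have hm1 := hmin x (dω x₀)
    linarith [e1.2]
  · have hm2 := hmin x₀ (dω x)
    linarith [e2.1]
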